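/- Let R be a valuation ring, Z its set of zero-divisors, and Q = R_Z its total quotient ring. Then the following conditions are equivalent: (1) Z is a nilpotent ideal; (2) Q is an artinian ring; (3) every flat R-module is finitely projective; (4) every flat R-module is singly projective. -/

import Mathlib

universe u

/-- `M` is singly projective if for every cyclic submodule `N` of `M` the inclusion
`N → M` factors through a free module. -/
def SinglyProjective (R : Type u) [Ring R] (M : Type v) [AddCommGroup M] [Module R M] : Prop :=
  ∀ x : M, ∃ (ι : Type v) (φ : (Submodule.span R ({x} : Set M)) →ₗ[R] (ι →₀ R))
    (π : (ι →₀ R) →ₗ[R] M), ∀ n : (Submodule.span R ({x} : Set M)), π (φ n) = (n : M)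

/-- `M` is finitely projective if for every finitely generated submodule `N` of `M` the
inclusion `N → M` factors through a free module. -/
def FinitelyProjective (R : Type u) [Ring R] (M : Type v) [AddCommGroup M] [Module R M] : Prop :=
  ∀ N : Submodule R M, N.FG → ∃ (ι : Type v) (φ : N →ₗ[R] (ι →₀ R))
    (π : (ι →₀ R) →ₗ[R] M), ∀ n : N, π (φ n) = (n : M)

namespace ZDT

variable {R : Type u} [CommRing R]

/-- The set of zero divisors. -/
abbrev zs (R : Type u) [CommRing R] : Set R := {r : R | ∃ s : R, s ≠ 0 ∧ r * s = 0}

theorem mem_span_zs (hval : ∀ I J : Ideal R, I ≤ J ∨ J ≤ I) [Nontrivial R] {r : R}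
    (hr : r ∈ Ideal.span (zs R)) : r ∈ zs R := by
  induction hr using Submodule.span_induction with
  | mem x hx => exact hx
  | zero => exact ⟨1, one_ne_zero, zero_mul 1⟩
  | add x y hx hy ihx ihy =>
    obtain ⟨s₁, hs₁, h₁⟩ := ihx
    obtain ⟨s₂, hs₂, h₂⟩ := ihy
    rcases hval (Ideal.span {s₁}) (Ideal.span {s₂}) with h | h
    · obtain ⟨c, rfl⟩ := Ideal.span_singleton_le_span_singleton.mp h
      exact ⟨s₂ * c, by simpa [mul_comm] using hs₁, by linear_combination h₁ + c * h₂⟩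
    · obtain ⟨c, rfl⟩ := Ideal.span_singleton_le_span_singleton.mp h
      exact ⟨s₁ * c, by simpa [mul_comm] using hs₂, by linear_combination h₂ + c * h₁⟩
  | smul a x hx ih =>
    obtain ⟨s, hs, h⟩ := ih
    exact ⟨s, hs, by rw [smul_eq_mul, mul_assoc, h, mul_zero]⟩

theorem subsingleton_nilp [Subsingleton R] (I : Ideal R) : IsNilpotent I :=
  ⟨1, by rw [pow_one]; exact Subsingleton.elim _ _⟩

/-- The key sequence for the (4) → (1) direction. -/
theorem exists_seq (hval : ∀ I J : Ideal R, I ≤ J ∨ J ≤ I) [Nontrivial R]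
    (hn : ¬ IsNilpotent (Ideal.span (zs R))) :
    ∃ t : ℕ → R, (∀ i, t i ∈ Ideal.span (zs R)) ∧
      ∀ p, (∏ i ∈ Finset.range p, t i) ≠ 0 := by
  set Z := Ideal.span (zs R) with hZ
  by_cases hc : ∃ z ∈ Z, ∀ k, z ^ k ≠ 0
  · obtain ⟨z, hz, hzk⟩ := hc
    exact ⟨fun _ => z, fun _ => hz, fun p => by
      simpa [Finset.prod_const, Finset.card_range] using hzk p⟩
  · push_neg at hc
    -- every element of Z is nilpotent; then Z ≤ Z * Z
    have hZZ : Z ≤ Z * Z := by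
      by_contra hle
      obtain ⟨z, hzZ, hz2⟩ := Set.not_subset.mp hle
      have h1 : Ideal.span {z} ≤ Z * Z ∨ Z * Z ≤ Ideal.span {z} := hval _ _
      rcases h1 with h1 | h1
      · exact hz2 (h1 (Ideal.mem_span_singleton_self z))
      · obtain ⟨k, hk⟩ := hc z hzZ
        refine hn ⟨2 * k, ?_⟩
        have h2 : Z ^ (2 * k) = (Z * Z) ^ k := by
          rw [pow_mul, sq]
        have h3 : (Z * Z) ^ k ≤ Ideal.span {z} ^ k := Ideal.pow_right_mono h1 k
        rw [Ideal.span_singleton_pow, hk] at h3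
        simp only [Ideal.span_singleton_eq_bot.mpr rfl] at h3
        rw [Ideal.zero_eq_bot, h2]
        exact le_bot_iff.mp h3
    have base : ∃ z, z ∈ Z ∧ z * 1 ≠ 0 := by
      have hZbot : Z ≠ ⊥ := by
        intro h
        exact hn ⟨1, by rw [pow_one, h, Ideal.zero_eq_bot]⟩
      obtain ⟨z, hz, hz0⟩ := Submodule.exists_mem_ne_zero_of_ne_bot hZbot
      exact ⟨z, hz, by rwa [mul_one]⟩
    have step : ∀ s : R, (∃ z, z ∈ Z ∧ z * s ≠ 0) →
        ∃ a, a ∈ Z ∧ ∃ z, z ∈ Z ∧ z * (s * a) ≠ 0 := by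
      rintro s ⟨z, hz, hzs⟩
      by_contra hcon
      push_neg at hcon
      have hzz : ∀ w ∈ Z * Z, w * s = 0 := by
        intro w hw
        refine Submodule.mul_induction_on hw (fun a ha b hb => ?_) (fun a b ha hb => ?_)
        · have := hcon b hb a ha
          calc a * b * s = a * (s * b) := by ring
          _ = 0 := this
        · rw [add_mul, ha, hb, add_zero]
      exact hzs (hzz z (hZZ hz))
    -- recursive construction
    let F : ℕ → {s : R // ∃ z, z ∈ Z ∧ z * s ≠ 0} := fun n => Nat.rec ⟨1, base⟩
      (fun _ p => ⟨p.1 * (step p.1 p.2).choose, (step p.1 p.2).choose_spec.2⟩) n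
    refine ⟨fun i => (step (F i).1 (F i).2).choose,
      fun i => (step (F i).1 (F i).2).choose_spec.1, fun p => ?_⟩
    have hprod : (∏ i ∈ Finset.range p, (step (F i).1 (F i).2).choose) = (F p).1 := by
      induction p with
      | zero => simp [F]
      | succ q ih => rw [Finset.prod_range_succ, ih]
    rw [hprod]
    obtain ⟨z, _, hzs⟩ := (F p).2
    intro h0
    rw [h0, mul_zero] at hzs
    exact hzs rfl

theorem singly_imp_nilp_aux (hval : ∀ I J : Ideal R, I ≤ J ∨ J ≤ I) [Nontrivial R]
    (t : ℕ → R) (htZ : ∀ i, t i ∈ Ideal.span {r : R | ∃ s : R, s ≠ 0 ∧ r * s = 0})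
    (htp : ∀ p, (∏ i ∈ Finset.range p, t i) ≠ 0)
    (h4 : ∀ (M : Type u) [AddCommGroup M] [Module R M], Module.Flat R M → SinglyProjective R M) :
    False := by
  classical
  set st : ℕ → R := fun p => ∏ i ∈ Finset.range p, t i with hst
  set d : ℕ → ℕ → R := fun i j => ∏ k ∈ Finset.Ico i j, t k with hd
  set fm : ∀ i j : ℕ, i ≤ j → R →ₗ[R] R := fun i j _ => LinearMap.lsmul R R (d i j) with hfm
  have hdmul : ∀ {i j k : ℕ}, i ≤ j → j ≤ k → d i j * d j k = d i k := by
    intro i j k hij hjk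
    simp only [hd]
    exact Finset.prod_Ico_consecutive t hij hjk
  haveI hds : DirectedSystem (fun _ : ℕ => R) (fun i j h => fm i j h) := by
    constructor
    · intro i x; simp [hfm, hd]
    · intro k j i hij hjk x
      simp only [hfm, LinearMap.lsmul_apply, smul_eq_mul]
      rw [← mul_assoc, mul_comm (d j k), hdmul hij hjk]
  set M := Module.DirectLimit (fun _ : ℕ => R) fm with hM
  set of : ∀ i : ℕ, R →ₗ[R] M := fun i => Module.DirectLimit.of R ℕ (fun _ : ℕ => R) fm i
    with hof
  have hof_f : ∀ {i j : ℕ} (h : i ≤ j) (x : R), of j (d i j * x) = of i x := by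
    intro i j h x
    have := Module.DirectLimit.of_f (R := R) (ι := ℕ) (G := fun _ : ℕ => R) (f := fm)
      (i := i) (j := j) (hij := h) (x := x)
    simpa [hfm, smul_eq_mul] using this
  -- flatness
  have hflat : Module.Flat R M := by
    apply Module.Flat.of_forall_isTrivialRelation
    intro ι f x hsum
    have hstage : ∀ i : Fin ι, ∃ (n : ℕ) (u : R), of n u = x i := fun i =>
      Module.DirectLimit.exists_of (x i)
    choose n u hu using hstage
    set k := Finset.univ.sup n with hk
    have hnk : ∀ i, n i ≤ k := fun i => Finset.le_sup (Finset.mem_univ i)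
    set v : Fin ι → R := fun i => d (n i) k * u i with hv
    have hxk : ∀ i, x i = of k (v i) := fun i => by rw [hv, hof_f (hnk i), hu]
    have hsum2 : of k (∑ i, f i • v i) = 0 := by
      rw [map_sum]
      rw [← hsum]
      congr 1
      ext i
      rw [map_smul, hxk i]
    obtain ⟨l, hkl, hl⟩ := Module.DirectLimit.of.zero_exact hsum2
    have hl' : d k l * (∑ i, f i • v i) = 0 := by
      rw [Finset.mul_sum]
      simpa [hfm, smul_eq_mul] using hl
    refine ⟨1, fun i _ => d k l * v i, fun _ => of l 1, fun i => ?_, fun j => ?_⟩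
    · rw [Fintype.sum_subsingleton (f := fun j : Fin 1 => (d k l * v i) • of l 1) 0]
      rw [← map_smul, smul_eq_mul, mul_one, hof_f hkl (v i), hxk i]
    · have heq : ∑ i, f i * (d k l * v i) = d k l * ∑ i, f i • v i := by
        rw [Finset.mul_sum]
        refine Finset.sum_congr rfl fun i _ => by rw [smul_eq_mul]; ring
      rw [heq, hl']
  -- the distinguished element
  set x₀ : M := of 0 1 with hx₀
  have hx0l : ∀ l : ℕ, of l (st l) = x₀ := by
    intro l
    have h := hof_f (Nat.zero_le l) 1
    rw [mul_one] at h
    rw [show st l = d 0 l from by simp only [hst, hd]; rw [Finset.range_eq_Ico]]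
    exact h
  obtain ⟨ι, φ, π, hπφ⟩ := h4 M hflat x₀
  have xmem : x₀ ∈ Submodule.span R {x₀} := Submodule.mem_span_singleton_self x₀
  set f0 : ι →₀ R := φ ⟨x₀, xmem⟩ with hf0
  have hann : ∀ r : R, r • x₀ = 0 → ∀ j, r * f0 j = 0 := by
    intro r hr j
    have h1 : r • (⟨x₀, xmem⟩ : Submodule.span R ({x₀} : Set M)) = 0 := by
      apply Subtype.ext
      rw [Submodule.coe_smul, ZeroMemClass.coe_zero]
      exact hr
    have h2 : r • f0 = 0 := by rw [hf0, ← map_smul, h1, map_zero]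
    have h3 := DFunLike.congr_fun h2 j
    simpa using h3
  set g : ι → M := fun j => π (Finsupp.single j 1) with hg
  have hπx : π f0 = x₀ := hπφ ⟨x₀, xmem⟩
  have hx0sum : x₀ = ∑ j ∈ f0.support, f0 j • g j := by
    have e1 : π f0 = ∑ j ∈ f0.support, f0 j • g j := by
      conv_lhs => rw [← Finsupp.sum_single f0]
      rw [Finsupp.sum, map_sum]
      refine Finset.sum_congr rfl fun j hj => ?_
      rw [hg, ← map_smul, Finsupp.smul_single', mul_one]
    rw [← hπx, e1]
  have hstage : ∀ j : ι, ∃ (mm : ℕ) (ww : R), of mm ww = g j := fun j =>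
    Module.DirectLimit.exists_of (g j)
  choose m w hw using hstage
  set l := f0.support.sup m with hls
  set w' : ι → R := fun j => d (m j) l * w j with hw'
  have hgl : ∀ j ∈ f0.support, g j = of l (w' j) := by
    intro j hj
    rw [hw']
    rw [hof_f (Finset.le_sup hj), hw]
  have hx0l2 : x₀ = of l (∑ j ∈ f0.support, f0 j • w' j) := by
    rw [map_sum, hx0sum]
    refine Finset.sum_congr rfl fun j hj => ?_
    rw [map_smul, ← hgl j hj]
  have hzero : of l ((∑ j ∈ f0.support, f0 j • w' j) - st l) = 0 := by
    rw [map_sub, ← hx0l2, hx0l l, sub_self]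
  obtain ⟨p, hlp, hp⟩ := Module.DirectLimit.of.zero_exact hzero
  have hp' : d l p * ((∑ j ∈ f0.support, f0 j • w' j) - st l) = 0 := by
    simpa [hfm, smul_eq_mul] using hp
  have hstp : st p = ∑ j ∈ f0.support, f0 j * (d l p * w' j) := by
    have h1 : st l * d l p = st p := by
      rw [hst, hd]
      simp only [Finset.range_eq_Ico]
      exact Finset.prod_Ico_consecutive t (Nat.zero_le l) hlp
    have h2 : d l p * ∑ j ∈ f0.support, f0 j • w' j = d l p * st l := by
      rw [← sub_eq_zero]
      rw [← mul_sub]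
      exact hp'
    calc st p = st l * d l p := h1.symm
    _ = d l p * st l := by ring
    _ = d l p * ∑ j ∈ f0.support, f0 j • w' j := h2.symm
    _ = ∑ j ∈ f0.support, f0 j * (d l p * w' j) := by
        rw [Finset.mul_sum]
        exact Finset.sum_congr rfl fun j _ => by rw [smul_eq_mul]; ring
  -- contradiction
  obtain ⟨c, hc0, hctp⟩ := mem_span_zs hval (htZ p)
  have hstsucc : st (p + 1) = st p * t p := by rw [hst]; exact Finset.prod_range_succ t p
  rcases hval (Ideal.span {c}) (Ideal.span {st p}) with hcase | hcase
  · obtain ⟨uu, huu⟩ := Ideal.span_singleton_le_span_singleton.mp hcase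
    have hux : uu • x₀ = 0 := by
      rw [← hx0l (p + 1), ← map_smul]
      have h5 : uu • st (p + 1) = 0 := by
        rw [smul_eq_mul, hstsucc]
        calc uu * (st p * t p) = (st p * uu) * t p := by ring
        _ = c * t p := by rw [← huu]
        _ = 0 := by rw [mul_comm]; exact hctp
      rw [h5, map_zero]
    have h6 : uu * st p = 0 := by
      rw [hstp, Finset.mul_sum]
      refine Finset.sum_eq_zero fun j hj => ?_
      calc uu * (f0 j * (d l p * w' j)) = (uu * f0 j) * (d l p * w' j) := by ring
      _ = 0 := by rw [hann uu hux j, zero_mul]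
    exact hc0 (by rw [huu, ← h6]; ring)
  · obtain ⟨vv, hvv⟩ := Ideal.span_singleton_le_span_singleton.mp hcase
    apply htp (p + 1)
    have : (∏ i ∈ Finset.range (p+1), t i) = st (p + 1) := rfl
    rw [this, hstsucc, hvv]
    calc c * vv * t p = vv * (t p * c) := by ring
    _ = 0 := by rw [hctp, mul_zero]

theorem finite_ideals (hval : ∀ I J : Ideal R, I ≤ J ∨ J ≤ I) [Nontrivial R]
    (h1 : IsNilpotent (Ideal.span {r : R | ∃ s : R, s ≠ 0 ∧ r * s = 0})) :
    Finite (Ideal (FractionRing R)) := by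
  classical
  set Z := Ideal.span {r : R | ∃ s : R, s ≠ 0 ∧ r * s = 0} with hZ
  obtain ⟨n₀, hn₀⟩ := h1
  set N := n₀ + 1 with hN
  have hZN : Z ^ N = ⊥ := by
    rw [hN, pow_succ, hn₀, Ideal.zero_eq_bot, Ideal.bot_mul]
  set Q := FractionRing R with hQ
  have hinj : Function.Injective (algebraMap R Q) := IsFractionRing.injective R Q
  haveI : Nontrivial Q := hinj.nontrivial
  have hvalQ : ∀ I J : Ideal Q, I ≤ J ∨ J ≤ I := by
    intro I J
    rcases hval (I.comap (algebraMap R Q)) (J.comap (algebraMap R Q)) with h | h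
    · left
      rw [← IsLocalization.map_comap (nonZeroDivisors R) Q I,
        ← IsLocalization.map_comap (nonZeroDivisors R) Q J]
      exact Ideal.map_mono h
    · right
      rw [← IsLocalization.map_comap (nonZeroDivisors R) Q I,
        ← IsLocalization.map_comap (nonZeroDivisors R) Q J]
      exact Ideal.map_mono h
  set m : Ideal Q := Ideal.map (algebraMap R Q) Z with hm
  have hmN : m ^ N = ⊥ := by rw [hm, ← Ideal.map_pow, hZN, Ideal.map_bot]
  have hmtop : m ≠ ⊤ := by
    intro htop
    have h1' : (1 : Q) ∈ m := htop ▸ Submodule.mem_top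
    have h2' : (1 : Q) ^ N ∈ m ^ N := Ideal.pow_mem_pow h1' N
    rw [one_pow, hmN] at h2'
    exact one_ne_zero ((Submodule.mem_bot Q).mp h2')
  have hunit : ∀ x : Q, x ∉ m → IsUnit x := by
    intro x hx
    obtain ⟨⟨a, s⟩, hmk⟩ := IsLocalization.mk'_surjective (nonZeroDivisors R) x
    dsimp only at hmk
    have ha : a ∉ {r : R | ∃ s : R, s ≠ 0 ∧ r * s = 0} := by
      intro haz
      apply hx
      have h1' : algebraMap R Q a ∈ m := Ideal.mem_map_of_mem _ (Ideal.subset_span haz)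
      have h2' : x = algebraMap R Q a * IsLocalization.mk' Q 1 s := by
        rw [← hmk, IsLocalization.mk'_eq_mul_mk'_one]
      rw [h2']
      exact Ideal.mul_mem_right _ _ h1'
    have hanz : a ∈ nonZeroDivisors R := by
      rw [mem_nonZeroDivisors_iff_right]
      intro z hz
      by_contra hz0
      exact ha ⟨z, hz0, by rwa [mul_comm]⟩
    rw [← hmk]
    exact IsUnit.of_mul_eq_one _ (IsLocalization.mk'_mul_mk'_eq_one' a s hanz)
  by_cases hm2 : m ≤ m * m
  · have hmbot : m = ⊥ := by
      have hpow : ∀ k : ℕ, m ≤ m ^ (k + 1) := by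
        intro k
        induction k with
        | zero => rw [pow_one]
        | succ k ih =>
          calc m ≤ m * m := hm2
          _ ≤ m * m ^ (k + 1) := Ideal.mul_mono_right ih
          _ = m ^ (k + 2) := by rw [pow_succ]; ring
      have h := hpow n₀
      rw [← hN, hmN] at h
      exact le_bot_iff.mp h
    have hall : ∀ I : Ideal Q, I = ⊥ ∨ I = ⊤ := by
      intro I
      by_cases hI : I = ⊥
      · exact Or.inl hI
      · right
        obtain ⟨x, hxI, hx0⟩ := Submodule.exists_mem_ne_zero_of_ne_bot hI
        have hxm : x ∉ m := by rw [hmbot]; simpa using hx0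
        exact Ideal.eq_top_of_isUnit_mem I hxI (hunit x hxm)
    refine Finite.of_surjective (fun b : Bool => if b then (⊤ : Ideal Q) else ⊥) ?_
    intro I
    rcases hall I with h | h
    exacts [⟨false, by simp [h]⟩, ⟨true, by simp [h]⟩]
  · rw [SetLike.le_def] at hm2
    push_neg at hm2
    obtain ⟨a, ham, ham2⟩ := hm2
    have haN : a ^ N = 0 := by
      have h := Ideal.pow_mem_pow ham N
      rw [hmN] at h
      exact (Submodule.mem_bot Q).mp h
    have hma : m = Ideal.span {a} := by
      apply le_antisymm
      · intro x hxm
        rcases hvalQ (Ideal.span {x}) (Ideal.span {a}) with h | h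
        · exact h (Ideal.mem_span_singleton_self x)
        · obtain ⟨uu, huu⟩ := Ideal.span_singleton_le_span_singleton.mp h
          by_cases hu : uu ∈ m
          · exact absurd (huu ▸ Ideal.mul_mem_mul hxm hu) ham2
          · obtain ⟨v, hv⟩ := (hunit uu hu).exists_right_inv
            have hx : x = a * v := by
              rw [huu, mul_assoc, hv, mul_one]
            rw [hx]
            exact Ideal.mul_mem_right v _ (Ideal.mem_span_singleton_self a)
      · rw [Ideal.span_le, Set.singleton_subset_iff]
        exact ham
    have key : ∀ (cnt e : ℕ), N ≤ e + cnt → ∀ I : Ideal Q, I ≤ Ideal.span {a ^ e} →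
        ∃ j, I = Ideal.span {a ^ j} := by
      intro cnt
      induction cnt with
      | zero =>
        intro e he I hI
        have hae : a ^ e = 0 := by
          have h : a ^ e = a ^ N * a ^ (e - N) := by rw [← pow_add]; congr 1; omega
          rw [h, haN, zero_mul]
        refine ⟨e, ?_⟩
        have hb0 : Ideal.span {(0 : Q)} = ⊥ := Ideal.span_singleton_eq_bot.mpr rfl
        rw [hae] at hI ⊢
        rw [hb0] at hI ⊢
        exact le_bot_iff.mp hI
      | succ cnt ih =>
        intro e he I hI
        by_cases hI2 : I ≤ Ideal.span {a ^ (e + 1)}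
        · exact ih (e + 1) (by omega) I hI2
        · rw [SetLike.le_def] at hI2
          push_neg at hI2
          obtain ⟨x, hxI, hx2⟩ := hI2
          obtain ⟨b, hb⟩ := Ideal.mem_span_singleton'.mp (hI hxI)
          have hbm : b ∉ m := by
            intro hbm
            rw [hma] at hbm
            obtain ⟨b', hb'⟩ := Ideal.mem_span_singleton'.mp hbm
            apply hx2
            refine Ideal.mem_span_singleton'.mpr ⟨b', ?_⟩
            rw [← hb, ← hb', pow_succ]
            ring
          obtain ⟨v, hv⟩ := (hunit b hbm).exists_right_inv
          have haeI : a ^ e ∈ I := by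
            have h : a ^ e = v * x := by
              rw [← hb, ← mul_assoc, mul_comm v b, hv, one_mul]
            rw [h]
            exact Ideal.mul_mem_left _ v hxI
          refine ⟨e, le_antisymm hI ?_⟩
          rw [Ideal.span_le, Set.singleton_subset_iff]
          exact haeI
    refine Finite.of_surjective (fun k : Fin (N + 1) => Ideal.span {a ^ (k : ℕ)}) ?_
    intro I
    obtain ⟨j, hj⟩ := key N 0 (by omega) I
      (by rw [pow_zero, Ideal.span_singleton_one]; exact le_top)
    by_cases hjN : j ≤ N
    · exact ⟨⟨j, by omega⟩, hj.symm⟩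
    · refine ⟨⟨N, by omega⟩, ?_⟩
      have hj0 : a ^ j = 0 := by
        have h : a ^ j = a ^ N * a ^ (j - N) := by rw [← pow_add]; congr 1; omega
        rw [h, haN, zero_mul]
      simp only [hj, hj0, haN]
      rfl

theorem nilp_imp_art (hval : ∀ I J : Ideal R, I ≤ J ∨ J ≤ I)
    (h1 : IsNilpotent (Ideal.span {r : R | ∃ s : R, s ≠ 0 ∧ r * s = 0})) :
    IsArtinianRing (FractionRing R) := by
  rcases subsingleton_or_nontrivial R with hsub | hnt
  · haveI : Subsingleton (FractionRing R) := by
      refine subsingleton_of_forall_eq 0 fun x => ?_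
      obtain ⟨⟨a, s⟩, h⟩ := IsLocalization.mk'_surjective (nonZeroDivisors R) x
      dsimp only at h
      rw [← h, show a = (0 : R) from Subsingleton.elim a 0, IsLocalization.mk'_zero]
    haveI : Finite (Ideal (FractionRing R)) := inferInstance
    exact Finite.to_wellFoundedLT
  · haveI := finite_ideals hval h1
    exact Finite.to_wellFoundedLT

theorem art_imp_nilp (hval : ∀ I J : Ideal R, I ≤ J ∨ J ≤ I)
    (h2 : IsArtinianRing (FractionRing R)) :
    IsNilpotent (Ideal.span {r : R | ∃ s : R, s ≠ 0 ∧ r * s = 0}) := by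
  rcases subsingleton_or_nontrivial R with hsub | hnt
  · exact ⟨1, by rw [pow_one]; exact Subsingleton.elim _ _⟩
  set Z := Ideal.span {r : R | ∃ s : R, s ≠ 0 ∧ r * s = 0} with hZ
  set Q := FractionRing R with hQ
  have hinj : Function.Injective (algebraMap R Q) := IsFractionRing.injective R Q
  haveI : Nontrivial Q := hinj.nontrivial
  have hvalQ : ∀ I J : Ideal Q, I ≤ J ∨ J ≤ I := by
    intro I J
    rcases hval (I.comap (algebraMap R Q)) (J.comap (algebraMap R Q)) with h | h
    · left
      rw [← IsLocalization.map_comap (nonZeroDivisors R) Q I,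
        ← IsLocalization.map_comap (nonZeroDivisors R) Q J]
      exact Ideal.map_mono h
    · right
      rw [← IsLocalization.map_comap (nonZeroDivisors R) Q I,
        ← IsLocalization.map_comap (nonZeroDivisors R) Q J]
      exact Ideal.map_mono h
  set m : Ideal Q := Ideal.map (algebraMap R Q) Z with hm
  have hmtop : m ≠ ⊤ := by
    intro htop
    have h1' : (1 : Q) ∈ m := htop ▸ Submodule.mem_top
    rw [hm, IsLocalization.mem_map_algebraMap_iff (nonZeroDivisors R) Q] at h1'
    obtain ⟨⟨zz, s⟩, hzs⟩ := h1'
    rw [one_mul] at hzs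
    have hsz : (s : R) ∈ Z := by
      have := hinj hzs
      rw [this]
      exact zz.2
    obtain ⟨c, hc0, hsc⟩ := mem_span_zs hval hsz
    exact hc0 (mem_nonZeroDivisors_iff_right.mp s.2 c (by rwa [mul_comm]))
  have hjac : m ≤ (⊥ : Ideal Q).jacobson := by
    refine le_sInf ?_
    rintro J ⟨-, hJmax⟩
    rcases hvalQ m J with h | h
    · exact h
    · rw [hJmax.eq_of_le hmtop h]
  obtain ⟨k, hk⟩ := IsArtinianRing.isNilpotent_jacobson_bot (R := Q)
  refine ⟨k, ?_⟩
  have hmk : m ^ k = ⊥ := by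
    have hle := Ideal.pow_right_mono hjac k
    rw [hk, Ideal.zero_eq_bot] at hle
    exact le_bot_iff.mp hle
  rw [Ideal.zero_eq_bot, eq_bot_iff]
  intro x hx
  have hmem : algebraMap R Q x ∈ m ^ k := by
    rw [hm, ← Ideal.map_pow]
    exact Ideal.mem_map_of_mem _ hx
  rw [hmk, Submodule.mem_bot] at hmem
  have : x = 0 := hinj (by rw [hmem, map_zero])
  rw [this]
  exact Submodule.zero_mem ⊥

theorem nilp_imp_finproj (hval : ∀ I J : Ideal R, I ≤ J ∨ J ≤ I)
    (h1 : IsNilpotent (Ideal.span {r : R | ∃ s : R, s ≠ 0 ∧ r * s = 0}))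
    (M : Type u) [AddCommGroup M] [Module R M] (hf : Module.Flat R M) :
    FinitelyProjective R M := by
  classical
  rcases subsingleton_or_nontrivial R with hsub | hnt
  · intro N hN
    haveI : Subsingleton M := Module.subsingleton R M
    exact ⟨PUnit, 0, 0, fun n => Subsingleton.elim _ _⟩
  intro N hN
  set Q := FractionRing R with hQ
  have hinj : Function.Injective (algebraMap R Q) := IsFractionRing.injective R Q
  haveI := finite_ideals hval h1
  haveI hnoeth : IsNoetherian Q Q := isNoetherian_iff'.mpr Finite.to_wellFoundedGT
  obtain ⟨n, x, hx⟩ := Submodule.fg_iff_exists_fin_generating_family.mp hN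
  set xl : (Fin n →₀ R) →ₗ[R] M := Finsupp.linearCombination R x with hxl
  have hrange : LinearMap.range xl = N := by rw [hxl, Finsupp.range_linearCombination, hx]
  set K := LinearMap.ker xl with hK
  set ψ : (Fin n →₀ R) →ₗ[R] (Fin n → Q) :=
    { toFun := fun a i => algebraMap R Q (a i)
      map_add' := by intro a b; funext i; simp
      map_smul' := by intro r a; funext i; simp [Algebra.smul_def] } with hψ
  have hψapp : ∀ (a : Fin n →₀ R) (i : Fin n), ψ a i = algebraMap R Q (a i) := fun a i => rfl
  have hψinj : Function.Injective ψ := by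
    intro a b hab
    ext i
    exact hinj (congrFun hab i)
  set J : Submodule Q (Fin n → Q) := Submodule.span Q (ψ '' (K : Set (Fin n →₀ R))) with hJ
  obtain ⟨T, hT⟩ := IsNoetherian.noetherian J
  -- common smul manipulation lemmas
  have hsm1 : ∀ (t₁ t₂ : R) (v₁ v₂ : Fin n → Q) (k₁ k₂ : Fin n →₀ R),
      t₁ • v₁ = ψ k₁ → t₂ • v₂ = ψ k₂ →
      (t₁ * t₂) • (v₁ + v₂) = ψ (t₂ • k₁ + t₁ • k₂) := by
    intro t₁ t₂ v₁ v₂ k₁ k₂ e₁ e₂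
    rw [map_add, map_smul, map_smul, ← e₁, ← e₂, smul_add, ← mul_smul, ← mul_smul,
      mul_comm t₂ t₁]
  have hsm2 : ∀ (q : Q) (v : Fin n → Q) (t : R) (kk : Fin n →₀ R), t • v = ψ kk →
      ∀ (r : R) (s : nonZeroDivisors R), IsLocalization.mk' Q r s = q →
      ((s : R) * t) • (q • v) = ψ (r • kk) := by
    intro q v t kk e r s hrs
    have hsq : algebraMap R Q s * q = algebraMap R Q r := by
      rw [← hrs, IsLocalization.mk'_spec']
    have e2 : ((s : R) * t) • (q • v) = (algebraMap R Q ((s : R) * t) * q) • v := by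
      rw [← algebraMap_smul Q ((s : R) * t) (q • v), smul_smul]
    have e3 : (r * t) • v = (algebraMap R Q r * algebraMap R Q t) • v := by
      rw [← algebraMap_smul Q (r * t) v, map_mul]
    have e4 : algebraMap R Q ((s : R) * t) * q = algebraMap R Q r * algebraMap R Q t := by
      rw [map_mul]
      calc algebraMap R Q s * algebraMap R Q t * q
          = algebraMap R Q t * (algebraMap R Q s * q) := by ring
      _ = algebraMap R Q t * algebraMap R Q r := by rw [hsq]
      _ = algebraMap R Q r * algebraMap R Q t := by ring
    rw [map_smul, ← e, ← mul_smul, e3, ← e4, e2]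
  have step1 : ∀ v ∈ J, ∃ t ∈ nonZeroDivisors R, ∃ kk ∈ K, t • v = ψ kk := by
    intro v hv
    rw [hJ] at hv
    induction hv using Submodule.span_induction with
    | mem w hw =>
      obtain ⟨kk, hkk, rfl⟩ := hw
      exact ⟨1, one_mem _, kk, hkk, one_smul _ _⟩
    | zero => exact ⟨1, one_mem _, 0, Submodule.zero_mem _, by simp⟩
    | add v₁ v₂ h₁ h₂ ih₁ ih₂ =>
      obtain ⟨t₁, ht₁, k₁, hk₁, e₁⟩ := ih₁
      obtain ⟨t₂, ht₂, k₂, hk₂, e₂⟩ := ih₂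
      exact ⟨t₁ * t₂, mul_mem ht₁ ht₂, t₂ • k₁ + t₁ • k₂,
        Submodule.add_mem _ (Submodule.smul_mem _ _ hk₁) (Submodule.smul_mem _ _ hk₂),
        hsm1 t₁ t₂ v₁ v₂ k₁ k₂ e₁ e₂⟩
    | smul q v hv ih =>
      obtain ⟨t, ht, kk, hkk, e⟩ := ih
      obtain ⟨⟨r, s⟩, hrs⟩ := IsLocalization.mk'_surjective (nonZeroDivisors R) q
      dsimp only at hrs
      exact ⟨(s : R) * t, mul_mem s.2 ht, r • kk, Submodule.smul_mem _ _ hkk,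
        hsm2 q v t kk e r s hrs⟩
  have hsel : ∀ g : {y : Fin n → Q // y ∈ T}, ∃ kk, kk ∈ K ∧
      ∃ t ∈ nonZeroDivisors R, t • (g : Fin n → Q) = ψ kk := by
    rintro ⟨g, hg⟩
    obtain ⟨t, ht, kk, hkk, e⟩ := step1 g (hT ▸ Submodule.subset_span hg)
    exact ⟨kk, hkk, t, ht, e⟩
  choose kf hkf using hsel
  set K₀ : Submodule R (Fin n →₀ R) := Submodule.span R (Set.range kf) with hK₀
  have hK₀fg : K₀.FG := Submodule.fg_span (Set.finite_range kf)
  have hK₀K : K₀ ≤ K := Submodule.span_le.mpr (by rintro _ ⟨g, rfl⟩; exact (hkf g).1)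
  have step3 : ∀ v ∈ J, ∃ t ∈ nonZeroDivisors R, ∃ kk ∈ K₀, t • v = ψ kk := by
    intro v hv
    rw [← hT] at hv
    induction hv using Submodule.span_induction with
    | mem w hw =>
      obtain ⟨t, ht, e⟩ := (hkf ⟨w, hw⟩).2
      exact ⟨t, ht, kf ⟨w, hw⟩, Submodule.subset_span ⟨⟨w, hw⟩, rfl⟩, e⟩
    | zero => exact ⟨1, one_mem _, 0, Submodule.zero_mem _, by simp⟩
    | add v₁ v₂ h₁ h₂ ih₁ ih₂ =>
      obtain ⟨t₁, ht₁, k₁, hk₁, e₁⟩ := ih₁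
      obtain ⟨t₂, ht₂, k₂, hk₂, e₂⟩ := ih₂
      exact ⟨t₁ * t₂, mul_mem ht₁ ht₂, t₂ • k₁ + t₁ • k₂,
        Submodule.add_mem _ (Submodule.smul_mem _ _ hk₁) (Submodule.smul_mem _ _ hk₂),
        hsm1 t₁ t₂ v₁ v₂ k₁ k₂ e₁ e₂⟩
    | smul q v hv ih =>
      obtain ⟨t, ht, kk, hkk, e⟩ := ih
      obtain ⟨⟨r, s⟩, hrs⟩ := IsLocalization.mk'_surjective (nonZeroDivisors R) q
      dsimp only at hrs
      exact ⟨(s : R) * t, mul_mem s.2 ht, r • kk, Submodule.smul_mem _ _ hkk,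
        hsm2 q v t kk e r s hrs⟩
  have step4 : ∀ p ∈ K, ∃ t ∈ nonZeroDivisors R, t • p ∈ K₀ := by
    intro p hp
    have hpJ : ψ p ∈ J := by
      rw [hJ]
      exact Submodule.subset_span ⟨p, hp, rfl⟩
    obtain ⟨t, ht, kk, hkk, e⟩ := step3 _ hpJ
    rw [← map_smul] at e
    refine ⟨t, ht, ?_⟩
    rw [hψinj e]
    exact hkk
  haveI : Module.Flat R M := hf
  haveI : Module.Finite R ↥K₀ := Module.Finite.iff_fg.mpr hK₀fg
  have hcomp : xl ∘ₗ K₀.subtype = 0 := by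
    ext ⟨k, hk⟩
    exact LinearMap.mem_ker.mp (hK₀K hk)
  obtain ⟨κ, a, y, hxy, haf⟩ : ∃ (κ : Type u) (a : (Fin n →₀ R) →ₗ[R] (κ →₀ R))
      (y : (κ →₀ R) →ₗ[R] M), xl = y ∘ₗ a ∧ a ∘ₗ K₀.subtype = 0 := by
    obtain ⟨k', a', y', hxy', haf'⟩ := Module.Flat.exists_factorization_of_comp_eq_zero_of_free (R := R) (M := M)
      (K := ↥K₀) (N := Fin n →₀ R) (f := K₀.subtype) (x := xl) hcomp
    let eκ : (Fin k' →₀ R) ≃ₗ[R] (ULift.{u} (Fin k') →₀ R) :=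
      Finsupp.domLCongr Equiv.ulift.symm
    refine ⟨ULift.{u} (Fin k'), eκ.toLinearMap ∘ₗ a', y' ∘ₗ eκ.symm.toLinearMap, ?_, ?_⟩
    · rw [hxy']; ext; simp
    · rw [LinearMap.comp_assoc, haf', LinearMap.comp_zero]
  have hKker : K ≤ LinearMap.ker a := by
    intro p hp
    obtain ⟨t, ht, htp⟩ := step4 p hp
    have h0 : a (t • p) = 0 := by
      have h := DFunLike.congr_fun haf (⟨t • p, htp⟩ : ↥K₀)
      simpa using h
    rw [map_smul] at h0
    rw [LinearMap.mem_ker]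
    ext j
    have h2 := DFunLike.congr_fun h0 j
    rw [Finsupp.smul_apply, smul_eq_mul] at h2
    have h3 : (a p) j * t = 0 := by rwa [mul_comm]
    simpa using mem_nonZeroDivisors_iff_right.mp ht _ h3
  set e1 : ↥N ≃ₗ[R] ↥(LinearMap.range xl) := LinearEquiv.ofEq _ _ hrange.symm with he1
  set E := LinearMap.quotKerEquivRange xl with hE
  refine ⟨κ, ((K.liftQ a hKker).comp (E.symm.toLinearMap)).comp e1.toLinearMap, y, ?_⟩
  intro nn
  obtain ⟨p, hp⟩ := Submodule.Quotient.mk_surjective K (E.symm (e1 nn))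
  have h5 : e1 nn = E (Submodule.Quotient.mk p) := by
    rw [hp, LinearEquiv.apply_symm_apply]
  have h6 : ((nn : ↥N) : M) = xl p := by
    have h7 : ((e1 nn : ↥(LinearMap.range xl)) : M) = xl p := by
      rw [h5, LinearMap.quotKerEquivRange_apply_mk]
    rw [← h7, he1, LinearEquiv.coe_ofEq_apply]
  show y ((K.liftQ a hKker) (E.symm (e1 nn))) = (nn : M)
  rw [← hp, Submodule.liftQ_apply]
  have h8 := DFunLike.congr_fun hxy p
  rw [h6]
  exact (h8 ▸ rfl : y (a p) = xl p)

end ZDT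

/-- for a valuation ring `R` with set of zero-divisors `Z` and total quotient
ring `Q = R_Z` the following are equivalent: (1) `Z` is a nilpotent ideal; (2) `Q` is
artinian; (3) every flat `R`-module is finitely projective; (4) every flat `R`-module is
singly projective. -/
theorem zeroDivisors_nilpotent_tfae (R : Type u) [CommRing R]
    (hval : ∀ I J : Ideal R, I ≤ J ∨ J ≤ I) :
    List.TFAE
      [IsNilpotent (Ideal.span {r : R | ∃ s : R, s ≠ 0 ∧ r * s = 0}),
       IsArtinianRing (FractionRing R),
       ∀ (M : Type u) [AddCommGroup M] [Module R M],
        Module.Flat R M → FinitelyProjective R M,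
       ∀ (M : Type u) [AddCommGroup M] [Module R M],
        Module.Flat R M → SinglyProjective R M] := by
  tfae_have 1 → 2 := fun h1 => ZDT.nilp_imp_art hval h1
  tfae_have 2 → 1 := fun h2 => ZDT.art_imp_nilp hval h2
  tfae_have 1 → 3 := fun h1 M _ _ hf => ZDT.nilp_imp_finproj hval h1 M hf
  tfae_have 3 → 4 := by
    intro h3 M _ _ hf
    intro x
    obtain ⟨ι, φ, π, h⟩ := h3 M hf (Submodule.span R {x}) (Submodule.fg_span_singleton x)
    exact ⟨ι, φ, π, h⟩
  tfae_have 4 → 1 := by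
    intro h4
    rcases subsingleton_or_nontrivial R with hsub | hnt
    · exact ⟨1, by rw [pow_one]; exact Subsingleton.elim _ _⟩
    by_contra hn
    obtain ⟨t, htZ, htp⟩ := ZDT.exists_seq hval hn
    exact ZDT.singly_imp_nilp_aux hval t htZ htp h4
  tfae_finish
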